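/- For all natural numbers a, b one has {tr(Z X^a), tr(Z X^b)} = Σ_{r=1}^{a} tr(Z X^r Z X^{a+b−r}) − Σ_{r=1}^{b} tr(Z X^r Z X^{a+b−r}) in 𝒪ₙ. -/

import Mathlib

open Matrix Finset

/-- The polynomial ring `𝒪ₙ = ℂ[X_{ij}, Z_{ij}]` in the entries of two `n × n` matrices. -/
noncomputable abbrev Oring (n : ℕ) : Type :=
  MvPolynomial ((Fin n × Fin n) ⊕ (Fin n × Fin n)) ℂ

/-- The matrix `X` with polynomial entries `X_{ij}`. -/
noncomputable def Xm (n : ℕ) : Matrix (Fin n) (Fin n) (Oring n) :=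
  Matrix.of fun i j => MvPolynomial.X (Sum.inl (i, j))

/-- The matrix `Z` with polynomial entries `Z_{ij}`. -/
noncomputable def Zm (n : ℕ) : Matrix (Fin n) (Fin n) (Oring n) :=
  Matrix.of fun i j => MvPolynomial.X (Sum.inr (i, j))

/-- Kronecker delta in `𝒪ₙ`. -/
noncomputable def kd (n : ℕ) (i j : Fin n) : Oring n := if i = j then 1 else 0



section TraceHelpers
variable {R : Type*} [CommRing R] {n : ℕ}

lemma mul_stdBasis_apply (A : Matrix (Fin n) (Fin n) R) (u v i j : Fin n) :
    (A * Matrix.single v u (1 : R)) i j = A i v * (if u = j then 1 else 0) := by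
  simp [Matrix.mul_apply, Matrix.single, ite_and, mul_ite]

lemma stdBasis_mul_apply (B : Matrix (Fin n) (Fin n) R) (u v i j : Fin n) :
    (Matrix.single v u (1 : R) * B) i j = (if i = v then 1 else 0) * B u j := by
  simp only [Matrix.mul_apply, Matrix.single, Matrix.of_apply, ite_and, ite_mul,
    one_mul, zero_mul]
  by_cases h : v = i <;> simp [h, eq_comm, Finset.sum_ite_eq]

lemma stdBasis_mul_mul_apply (A B : Matrix (Fin n) (Fin n) R) (u v i j : Fin n) :
    (A * Matrix.single v u (1 : R) * B) i j = A i v * B u j := by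
  rw [Matrix.mul_apply]
  simp only [mul_stdBasis_apply, ite_mul, mul_ite, mul_one, mul_zero, one_mul, zero_mul]
  simp [Finset.sum_ite_eq]

lemma trace_AE (A : Matrix (Fin n) (Fin n) R) (u v : Fin n) :
    Matrix.trace (A * Matrix.single v u (1 : R)) = A u v := by
  simp [Matrix.trace, Matrix.diag, mul_stdBasis_apply, mul_ite, eq_comm]

lemma trace_AEB (A B : Matrix (Fin n) (Fin n) R) (u v : Fin n) :
    Matrix.trace (A * Matrix.single v u (1 : R) * B) = (B * A) u v := by
  rw [Matrix.trace_mul_comm, ← Matrix.mul_assoc, trace_AE]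

lemma trace_C_AE (C A : Matrix (Fin n) (Fin n) R) (u v : Fin n) :
    Matrix.trace (C * (A * Matrix.single v u (1 : R))) = (C * A) u v := by
  rw [← Matrix.mul_assoc, trace_AE]

lemma trace_C_EB (C B : Matrix (Fin n) (Fin n) R) (u v : Fin n) :
    Matrix.trace (C * (Matrix.single v u (1 : R) * B)) = (B * C) u v := by
  rw [← Matrix.mul_assoc, Matrix.trace_mul_comm, ← Matrix.mul_assoc, trace_AE]

lemma trace_C_AEB (C A B : Matrix (Fin n) (Fin n) R) (u v : Fin n) :
    Matrix.trace (C * (A * Matrix.single v u (1 : R) * B)) = (B * C * A) u v := by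
  rw [← Matrix.mul_assoc, Matrix.trace_mul_comm, ← Matrix.mul_assoc, ← Matrix.mul_assoc,
    trace_AE]

end TraceHelpers

section Aux

variable {n : ℕ} (br : Oring n → Oring n → Oring n)

noncomputable def Dm (f : Oring n) (M : Matrix (Fin n) (Fin n) (Oring n)) :
    Matrix (Fin n) (Fin n) (Oring n) :=
  Matrix.of fun i j => br f (M i j)

@[simp] lemma Dm_apply (f : Oring n) (M : Matrix (Fin n) (Fin n) (Oring n)) (i j : Fin n) :
    Dm br f M i j = br f (M i j) := rfl

variable (hXX : ∀ i j u v : Fin n,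
      br (Xm n i j) (Xm n u v) =
        (2⁻¹ : ℂ) • ((Xm n ^ 2) u j * kd n i v) - (2⁻¹ : ℂ) • (kd n u j * (Xm n ^ 2) i v))
variable (hZZ : ∀ i j u v : Fin n,
      br (Zm n i j) (Zm n u v) =
        (2⁻¹ : ℂ) • (kd n u j * (Zm n ^ 2) i v) - (2⁻¹ : ℂ) • ((Zm n ^ 2) u j * kd n i v))
variable (hXZ : ∀ i j u v : Fin n,
      br (Xm n i j) (Zm n u v) =
        (2⁻¹ : ℂ) • ((Zm n * Xm n) u j * kd n i v)
          + (2⁻¹ : ℂ) • (kd n u j * (Xm n * Zm n) i v)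
          + (2⁻¹ : ℂ) • (Zm n u j * Xm n i v)
          - (2⁻¹ : ℂ) • (Xm n u j * Zm n i v))
variable (hanti : ∀ f g : Oring n, br f g = - br g f)

include hXX in
lemma DmXX (u v : Fin n) :
    Dm br (Xm n u v) (Xm n) =
      (2⁻¹ : ℂ) • (Xm n ^ 2 * Matrix.single v u 1)
        - (2⁻¹ : ℂ) • (Matrix.single v u 1 * Xm n ^ 2) := by
  refine Matrix.ext fun i j => ?_
  simp only [Dm_apply, hXX u v i j, Matrix.sub_apply, Matrix.smul_apply, mul_stdBasis_apply,
    stdBasis_mul_apply, kd, MvPolynomial.smul_eq_C_mul]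

include hXZ in
lemma DmXZ (u v : Fin n) :
    Dm br (Xm n u v) (Zm n) =
      (2⁻¹ : ℂ) • ((Zm n * Xm n) * Matrix.single v u 1)
        + (2⁻¹ : ℂ) • (Matrix.single v u 1 * (Xm n * Zm n))
        + (2⁻¹ : ℂ) • (Zm n * Matrix.single v u 1 * Xm n)
        - (2⁻¹ : ℂ) • (Xm n * Matrix.single v u 1 * Zm n) := by
  refine Matrix.ext fun i j => ?_
  simp only [Dm_apply, hXZ u v i j, Matrix.sub_apply, Matrix.add_apply, Matrix.smul_apply,
    mul_stdBasis_apply, stdBasis_mul_apply, stdBasis_mul_mul_apply, kd,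
    MvPolynomial.smul_eq_C_mul]

include hZZ in
lemma DmZZ (u v : Fin n) :
    Dm br (Zm n u v) (Zm n) =
      (2⁻¹ : ℂ) • (Matrix.single v u 1 * Zm n ^ 2)
        - (2⁻¹ : ℂ) • (Zm n ^ 2 * Matrix.single v u 1) := by
  refine Matrix.ext fun i j => ?_
  simp only [Dm_apply, hZZ u v i j, Matrix.sub_apply, Matrix.smul_apply, mul_stdBasis_apply,
    stdBasis_mul_apply, kd, MvPolynomial.smul_eq_C_mul]

include hXZ hanti in
lemma DmZX (u v : Fin n) :
    Dm br (Zm n u v) (Xm n) =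
      (2⁻¹ : ℂ) • (Zm n * Matrix.single v u 1 * Xm n)
        - (2⁻¹ : ℂ) • (Matrix.single v u 1 * (Zm n * Xm n))
        - (2⁻¹ : ℂ) • ((Xm n * Zm n) * Matrix.single v u 1)
        - (2⁻¹ : ℂ) • (Xm n * Matrix.single v u 1 * Zm n) := by
  refine Matrix.ext fun i j => ?_
  have h : br (Zm n u v) (Xm n i j) = - br (Xm n i j) (Zm n u v) := hanti _ _
  simp only [Dm_apply, h, hXZ i j u v, Matrix.sub_apply, Matrix.add_apply, Matrix.smul_apply,
    mul_stdBasis_apply, stdBasis_mul_apply, stdBasis_mul_mul_apply, kd,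
    MvPolynomial.smul_eq_C_mul]
  ring

variable (hadd : ∀ f g h : Oring n, br f (g + h) = br f g + br f h)
variable (hleib : ∀ f g h : Oring n, br f (g * h) = br f g * h + g * br f h)

include hadd in
lemma br_zero (f : Oring n) : br f 0 = 0 := by
  have h := hadd f 0 0
  rw [add_zero] at h
  exact (left_eq_add.mp h)

include hadd in
lemma br_sum {ι : Type*} (f : Oring n) (s : Finset ι) (g : ι → Oring n) :
    br f (∑ i ∈ s, g i) = ∑ i ∈ s, br f (g i) := by
  classical
  induction s using Finset.induction_on with
  | empty => simpa using br_zero br hadd f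
  | insert x s hx ih => rw [Finset.sum_insert hx, hadd, ih, Finset.sum_insert hx]

include hleib in
lemma br_one (f : Oring n) : br f 1 = 0 := by
  have h := hleib f 1 1
  rw [mul_one, mul_one, one_mul] at h
  exact (left_eq_add.mp h)

include hadd hleib in
lemma Dm_mul (f : Oring n) (M N : Matrix (Fin n) (Fin n) (Oring n)) :
    Dm br f (M * N) = Dm br f M * N + M * Dm br f N := by
  refine Matrix.ext fun i j => ?_
  simp only [Dm_apply, Matrix.mul_apply, Matrix.add_apply]
  rw [br_sum br hadd, ← Finset.sum_add_distrib]
  exact Finset.sum_congr rfl fun k _ => hleib f (M i k) (N k j)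

include hadd hleib in
lemma Dm_pow (f : Oring n) (M : Matrix (Fin n) (Fin n) (Oring n)) (k : ℕ) :
    Dm br f (M ^ k) = ∑ m ∈ Finset.range k, M ^ m * Dm br f M * M ^ (k - 1 - m) := by
  induction k with
  | zero =>
      simp only [pow_zero, Finset.range_zero, Finset.sum_empty]
      refine Matrix.ext fun i j => ?_
      simp only [Dm_apply, Matrix.one_apply, Matrix.zero_apply]
      split
      · exact br_one br hleib f
      · exact br_zero br hadd f
  | succ k ih =>
      rw [pow_succ, Dm_mul br hadd hleib, ih, Finset.sum_range_succ, Finset.sum_mul]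
      refine congrArg₂ (· + ·) ?_ ?_
      · refine Finset.sum_congr rfl fun m hm => ?_
        rw [Matrix.mul_assoc (M ^ m * Dm br f M), ← pow_succ]
        congr 2
        have := Finset.mem_range.mp hm
        omega
      · simp

include hadd in
lemma br_trace (f : Oring n) (M : Matrix (Fin n) (Fin n) (Oring n)) :
    br f (Matrix.trace M) = Matrix.trace (Dm br f M) := by
  simp only [Matrix.trace, Matrix.diag]
  rw [br_sum br hadd]
  rfl


include hXX in
lemma trXX (u v : Fin n) (C : Matrix (Fin n) (Fin n) (Oring n)) :
    Matrix.trace (C * Dm br (Xm n u v) (Xm n)) =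
      (2⁻¹ : ℂ) • ((C * Xm n ^ 2) u v) - (2⁻¹ : ℂ) • ((Xm n ^ 2 * C) u v) := by
  rw [DmXX br hXX u v, Matrix.mul_sub, Matrix.mul_smul, Matrix.mul_smul, Matrix.trace_sub,
    Matrix.trace_smul, Matrix.trace_smul, trace_C_AE, trace_C_EB]

include hXZ in
lemma trXZ (u v : Fin n) (C : Matrix (Fin n) (Fin n) (Oring n)) :
    Matrix.trace (C * Dm br (Xm n u v) (Zm n)) =
      (2⁻¹ : ℂ) • ((C * (Zm n * Xm n)) u v) + (2⁻¹ : ℂ) • ((Xm n * Zm n * C) u v)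
        + (2⁻¹ : ℂ) • ((Xm n * C * Zm n) u v) - (2⁻¹ : ℂ) • ((Zm n * C * Xm n) u v) := by
  rw [DmXZ br hXZ u v]
  rw [Matrix.mul_sub, Matrix.mul_add, Matrix.mul_add, Matrix.mul_smul, Matrix.mul_smul,
    Matrix.mul_smul, Matrix.mul_smul, Matrix.trace_sub, Matrix.trace_add, Matrix.trace_add,
    Matrix.trace_smul, Matrix.trace_smul, Matrix.trace_smul, Matrix.trace_smul,
    trace_C_AE, trace_C_EB, trace_C_AEB, trace_C_AEB]

include hZZ in
lemma trZZ (u v : Fin n) (C : Matrix (Fin n) (Fin n) (Oring n)) :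
    Matrix.trace (C * Dm br (Zm n u v) (Zm n)) =
      (2⁻¹ : ℂ) • ((Zm n ^ 2 * C) u v) - (2⁻¹ : ℂ) • ((C * Zm n ^ 2) u v) := by
  rw [DmZZ br hZZ u v, Matrix.mul_sub, Matrix.mul_smul, Matrix.mul_smul, Matrix.trace_sub,
    Matrix.trace_smul, Matrix.trace_smul, trace_C_AE, trace_C_EB]

include hXZ hanti in
lemma trZX (u v : Fin n) (C : Matrix (Fin n) (Fin n) (Oring n)) :
    Matrix.trace (C * Dm br (Zm n u v) (Xm n)) =
      (2⁻¹ : ℂ) • ((Xm n * C * Zm n) u v) - (2⁻¹ : ℂ) • ((Zm n * Xm n * C) u v)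
        - (2⁻¹ : ℂ) • ((C * (Xm n * Zm n)) u v) - (2⁻¹ : ℂ) • ((Zm n * C * Xm n) u v) := by
  rw [DmZX br hXZ hanti u v]
  rw [Matrix.mul_sub, Matrix.mul_sub, Matrix.mul_sub, Matrix.mul_smul, Matrix.mul_smul,
    Matrix.mul_smul, Matrix.mul_smul, Matrix.trace_sub, Matrix.trace_sub, Matrix.trace_sub,
    Matrix.trace_smul, Matrix.trace_smul, Matrix.trace_smul, Matrix.trace_smul,
    trace_C_AE, trace_C_EB, trace_C_AEB, trace_C_AEB]

include hadd hleib in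
lemma br_tr (f : Oring n) (a : ℕ) :
    br f (Matrix.trace (Zm n * Xm n ^ a)) =
      Matrix.trace (Xm n ^ a * Dm br f (Zm n))
        + ∑ m ∈ Finset.range a,
            Matrix.trace (Xm n ^ (a - 1 - m) * Zm n * Xm n ^ m * Dm br f (Xm n)) := by
  rw [br_trace br hadd, Dm_mul br hadd hleib, Matrix.trace_add,
    Matrix.trace_mul_comm (Dm br f (Zm n))]
  congr 1
  rw [Dm_pow br hadd hleib, Matrix.mul_sum, Matrix.trace_sum]
  refine Finset.sum_congr rfl fun m _ => ?_
  rw [← Matrix.mul_assoc, Matrix.trace_mul_comm, ← Matrix.mul_assoc, ← Matrix.mul_assoc]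

lemma tele2 {M : Type*} [AddCommGroup M] (g : ℕ → M) (a : ℕ) :
    ∑ m ∈ Finset.range a, (g (m+2) - g m) = g a + g (a+1) - g 0 - g 1 := by
  induction a with
  | zero => simp
  | succ a ih => rw [Finset.sum_range_succ, ih]; abel

lemma keyX (a : ℕ) :
    (2⁻¹ : ℂ) • (Xm n ^ a * (Zm n * Xm n)) + (2⁻¹ : ℂ) • (Xm n * Zm n * Xm n ^ a)
      + (2⁻¹ : ℂ) • (Xm n * Xm n ^ a * Zm n) - (2⁻¹ : ℂ) • (Zm n * Xm n ^ a * Xm n)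
      + ∑ m ∈ Finset.range a,
          ((2⁻¹ : ℂ) • (Xm n ^ (a-1-m) * Zm n * Xm n ^ m * Xm n ^ 2)
            - (2⁻¹ : ℂ) • (Xm n ^ 2 * (Xm n ^ (a-1-m) * Zm n * Xm n ^ m)))
      = Xm n * Zm n * Xm n ^ a := by
  set X := Xm n with hX
  set Z := Zm n with hZ
  set g : ℕ → Matrix (Fin n) (Fin n) (Oring n) := fun r => X ^ (a+1-r) * Z * X ^ r with hg
  have hsum : ∀ m ∈ Finset.range a,
      (2⁻¹ : ℂ) • (X ^ (a-1-m) * Z * X ^ m * X ^ 2)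
        - (2⁻¹ : ℂ) • (X ^ 2 * (X ^ (a-1-m) * Z * X ^ m))
      = (2⁻¹ : ℂ) • (g (m+2) - g m) := by
    intro m hm
    have hm' := Finset.mem_range.mp hm
    have e1 : X ^ (a-1-m) * Z * X ^ m * X ^ 2 = g (m+2) := by
      simp only [hg]
      have : a + 1 - (m+2) = a - 1 - m := by omega
      rw [this, pow_add, Matrix.mul_assoc (X ^ (a-1-m) * Z)]
    have e2 : X ^ 2 * (X ^ (a-1-m) * Z * X ^ m) = g m := by
      simp only [hg]
      have : a + 1 - m = 2 + (a - 1 - m) := by omega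
      rw [this, pow_add, ← Matrix.mul_assoc, ← Matrix.mul_assoc]
    rw [e1, e2, smul_sub]
  rw [Finset.sum_congr rfl hsum, ← Finset.smul_sum, tele2]
  have e3 : X ^ a * (Z * X) = g 1 := by
    simp only [hg]
    have : a + 1 - 1 = a := by omega
    rw [this, pow_one, Matrix.mul_assoc]
  have e4 : X * Z * X ^ a = g a := by
    simp only [hg]
    have : a + 1 - a = 1 := by omega
    rw [this, pow_one]
  have e5 : X * X ^ a * Z = g 0 := by
    simp only [hg]
    rw [Nat.sub_zero, pow_zero, Matrix.mul_one, ← pow_succ', pow_succ]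
  have e6 : Z * X ^ a * X = g (a+1) := by
    simp only [hg]
    have : a + 1 - (a+1) = 0 := by omega
    rw [this, pow_zero, Matrix.one_mul, pow_succ, ← Matrix.mul_assoc]
  rw [e3, e4, e5, e6]
  module


include hadd hleib hXX hXZ in
lemma brX_tr (u v : Fin n) (a : ℕ) :
    br (Xm n u v) (Matrix.trace (Zm n * Xm n ^ a)) = (Xm n * Zm n * Xm n ^ a) u v := by
  rw [br_tr br hadd hleib, trXZ br hXZ u v]
  rw [Finset.sum_congr rfl (fun m _ => trXX br hXX u v (Xm n ^ (a-1-m) * Zm n * Xm n ^ m))]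
  conv_rhs => rw [← keyX (n := n) a]
  simp [Matrix.add_apply, Matrix.sub_apply, Matrix.smul_apply, Matrix.sum_apply,
    Finset.sum_sub_distrib]

/-- the matrix whose `(u,v)` entry is `{Z_{uv}, tr(Z X^a)}` (with a sign). -/
noncomputable def Wmat (n a : ℕ) : Matrix (Fin n) (Fin n) (Oring n) :=
  (2⁻¹ : ℂ) • (Zm n ^ 2 * Xm n ^ a) - (2⁻¹ : ℂ) • (Zm n * Xm n ^ a * Zm n)
    - (2⁻¹ : ℂ) • (∑ m ∈ Finset.range a, Zm n * Xm n ^ (a-m) * Zm n * Xm n ^ m)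
    - (2⁻¹ : ℂ) • (∑ m ∈ Finset.range a, Zm n * Xm n ^ (a-1-m) * Zm n * Xm n ^ (m+1))

set_option maxHeartbeats 1600000 in
lemma keyZ (a : ℕ) :
    (2⁻¹ : ℂ) • (Zm n ^ 2 * Xm n ^ a) - (2⁻¹ : ℂ) • (Xm n ^ a * Zm n ^ 2)
      + ∑ m ∈ Finset.range a,
          ((2⁻¹ : ℂ) • (Xm n * (Xm n ^ (a-1-m) * Zm n * Xm n ^ m) * Zm n)
            - (2⁻¹ : ℂ) • (Zm n * Xm n * (Xm n ^ (a-1-m) * Zm n * Xm n ^ m))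
            - (2⁻¹ : ℂ) • ((Xm n ^ (a-1-m) * Zm n * Xm n ^ m) * (Xm n * Zm n))
            - (2⁻¹ : ℂ) • (Zm n * (Xm n ^ (a-1-m) * Zm n * Xm n ^ m) * Xm n))
      = Wmat n a := by
  set X := Xm n with hX
  set Z := Zm n with hZ
  set h : ℕ → Matrix (Fin n) (Fin n) (Oring n) := fun r => X ^ (a-r) * Z * X ^ r * Z with hh
  have hsum : ∀ m ∈ Finset.range a,
      (2⁻¹ : ℂ) • (X * (X ^ (a-1-m) * Z * X ^ m) * Z)
        - (2⁻¹ : ℂ) • (Z * X * (X ^ (a-1-m) * Z * X ^ m))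
        - (2⁻¹ : ℂ) • ((X ^ (a-1-m) * Z * X ^ m) * (X * Z))
        - (2⁻¹ : ℂ) • (Z * (X ^ (a-1-m) * Z * X ^ m) * X)
      = (2⁻¹ : ℂ) • (h m - h (m+1))
          - (2⁻¹ : ℂ) • (Z * X ^ (a-m) * Z * X ^ m)
          - (2⁻¹ : ℂ) • (Z * X ^ (a-1-m) * Z * X ^ (m+1)) := by
    intro m hm
    have hm' := Finset.mem_range.mp hm
    have hc : a - 1 - m + 1 = a - m := by omega
    have e1 : X * (X ^ (a-1-m) * Z * X ^ m) * Z = h m := by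
      simp only [hh]
      rw [← Matrix.mul_assoc, ← Matrix.mul_assoc, ← pow_succ', hc]
    have e2 : (X ^ (a-1-m) * Z * X ^ m) * (X * Z) = h (m+1) := by
      simp only [hh]
      have : a - (m+1) = a - 1 - m := by omega
      rw [this, ← Matrix.mul_assoc, Matrix.mul_assoc (X ^ (a-1-m) * Z), ← pow_succ]
    have e3 : Z * X * (X ^ (a-1-m) * Z * X ^ m) = Z * X ^ (a-m) * Z * X ^ m := by
      rw [← Matrix.mul_assoc, ← Matrix.mul_assoc, Matrix.mul_assoc Z X, ← pow_succ', hc]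
    have e4 : Z * (X ^ (a-1-m) * Z * X ^ m) * X = Z * X ^ (a-1-m) * Z * X ^ (m+1) := by
      rw [← Matrix.mul_assoc, ← Matrix.mul_assoc, Matrix.mul_assoc (Z * X ^ (a-1-m) * Z),
        ← pow_succ]
    rw [e1, e2, e3, e4, smul_sub]
    abel
  rw [Finset.sum_congr rfl hsum]
  rw [Finset.sum_sub_distrib, Finset.sum_sub_distrib, ← Finset.smul_sum, ← Finset.smul_sum,
    ← Finset.smul_sum, Finset.sum_range_sub' h a]
  have h0 : h 0 = X ^ a * Z ^ 2 := by
    simp only [hh]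
    rw [Nat.sub_zero, pow_zero, Matrix.mul_one, Matrix.mul_assoc, ← sq]
  have ha : h a = Z * X ^ a * Z := by
    simp only [hh]
    rw [Nat.sub_self, pow_zero, Matrix.one_mul]
  rw [h0, ha, Wmat]
  module

include hadd hleib hZZ hXZ hanti in
lemma brZ_tr (u v : Fin n) (a : ℕ) :
    br (Zm n u v) (Matrix.trace (Zm n * Xm n ^ a)) = Wmat n a u v := by
  rw [br_tr br hadd hleib, trZZ br hZZ u v]
  rw [Finset.sum_congr rfl
    (fun m _ => trZX br hXZ hanti u v (Xm n ^ (a-1-m) * Zm n * Xm n ^ m))]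
  conv_rhs => rw [← keyZ (n := n) a]
  simp [Matrix.add_apply, Matrix.sub_apply, Matrix.smul_apply, Matrix.sum_apply,
    Finset.sum_sub_distrib]

end Aux

noncomputable def Sd (n a b r : ℕ) : Oring n :=
  Matrix.trace (Zm n * Xm n ^ r * Zm n * Xm n ^ (a + b - r))

lemma icc_sum {M : Type*} [AddCommMonoid M] (f : ℕ → M) (c : ℕ) :
    ∑ i ∈ Finset.Icc 1 c, f i = ∑ i ∈ Finset.range c, f (i+1) := by
  rw [← Finset.Ico_add_one_right_eq_Icc, Finset.sum_Ico_eq_sum_range]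
  simp [add_comm]

lemma icc_S (n a b c : ℕ) :
    ∑ r ∈ Finset.Icc 1 c, Matrix.trace (Zm n * Xm n ^ r * Zm n * Xm n ^ (a+b-r))
      = ∑ m ∈ Finset.range c, Sd n a b (m+1) :=
  icc_sum _ c

lemma q1 (n a b : ℕ) :
    Matrix.trace (Xm n ^ b * (Zm n ^ 2 * Xm n ^ a)) = Sd n a b 0 := by
  simp only [Sd]
  rw [Matrix.trace_mul_comm]
  refine congrArg Matrix.trace ?_
  simp [pow_zero, Nat.sub_zero, Matrix.mul_one, pow_add, sq, Matrix.mul_assoc]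

lemma q2 (n a b : ℕ) :
    Matrix.trace (Xm n ^ b * (Zm n * Xm n ^ a * Zm n)) = Sd n a b a := by
  simp only [Sd]
  rw [show a + b - a = b from by omega, Matrix.trace_mul_comm]

lemma q3 (n a b : ℕ) :
    ∑ m ∈ Finset.range a,
        Matrix.trace (Xm n ^ b * (Zm n * Xm n ^ (a-m) * Zm n * Xm n ^ m))
      = ∑ m ∈ Finset.range a, Sd n a b (m+1) := by
  rw [← Finset.sum_range_reflect]
  refine Finset.sum_congr rfl fun m hm => ?_
  have hm' := Finset.mem_range.mp hm
  rw [show a - (a-1-m) = m + 1 from by omega]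
  simp only [Sd]
  rw [show a + b - (m+1) = (a-1-m) + b from by omega, Matrix.trace_mul_comm]
  refine congrArg Matrix.trace ?_
  simp [pow_add, Matrix.mul_assoc]

lemma q4 (n a b : ℕ) :
    ∑ m ∈ Finset.range a,
        Matrix.trace (Xm n ^ b * (Zm n * Xm n ^ (a-1-m) * Zm n * Xm n ^ (m+1)))
      = ∑ m ∈ Finset.range a, Sd n a b m := by
  rw [← Finset.sum_range_reflect]
  refine Finset.sum_congr rfl fun m hm => ?_
  have hm' := Finset.mem_range.mp hm
  rw [show a - 1 - (a-1-m) = m from by omega, show (a-1-m) + 1 = a - m from by omega]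
  simp only [Sd]
  rw [show a + b - m = (a-m) + b from by omega, Matrix.trace_mul_comm]
  refine congrArg Matrix.trace ?_
  simp [pow_add, Matrix.mul_assoc]

lemma q5 (n a b m : ℕ) (hm : m < b) :
    Matrix.trace (Xm n ^ (b-1-m) * Zm n * Xm n ^ m * (Xm n * Zm n * Xm n ^ a))
      = Sd n a b (m+1) := by
  simp only [Sd]
  rw [show a + b - (m+1) = a + (b-1-m) from by omega]
  rw [Matrix.mul_assoc (Xm n ^ (b-1-m)), Matrix.mul_assoc (Xm n ^ (b-1-m)),
    Matrix.trace_mul_comm]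
  refine congrArg Matrix.trace ?_
  simp [pow_add, pow_succ, Matrix.mul_assoc]

/-- `{tr(Z X^a), tr(Z X^b)} = Σ_{r=1}^{a} tr(Z X^r Z X^{a+b−r}) − Σ_{r=1}^{b} tr(Z X^r Z X^{a+b−r})`. -/
theorem trace_ZX_bracket_trace_ZX (n : ℕ) (hn : 1 ≤ n)
    (br : Oring n → Oring n → Oring n)
    (hadd : ∀ f g h : Oring n, br f (g + h) = br f g + br f h)
    (hsmul : ∀ (c : ℂ) (f g : Oring n), br f (c • g) = c • br f g)
    (hleib : ∀ f g h : Oring n, br f (g * h) = br f g * h + g * br f h)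
    (hanti : ∀ f g : Oring n, br f g = - br g f)
    (hXX : ∀ i j u v : Fin n,
      br (Xm n i j) (Xm n u v) =
        (2⁻¹ : ℂ) • ((Xm n ^ 2) u j * kd n i v) - (2⁻¹ : ℂ) • (kd n u j * (Xm n ^ 2) i v))
    (hZZ : ∀ i j u v : Fin n,
      br (Zm n i j) (Zm n u v) =
        (2⁻¹ : ℂ) • (kd n u j * (Zm n ^ 2) i v) - (2⁻¹ : ℂ) • ((Zm n ^ 2) u j * kd n i v))
    (hXZ : ∀ i j u v : Fin n,
      br (Xm n i j) (Zm n u v) =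
        (2⁻¹ : ℂ) • ((Zm n * Xm n) u j * kd n i v)
          + (2⁻¹ : ℂ) • (kd n u j * (Xm n * Zm n) i v)
          + (2⁻¹ : ℂ) • (Zm n u j * Xm n i v)
          - (2⁻¹ : ℂ) • (Xm n u j * Zm n i v))
    (a b : ℕ) :
    br (Matrix.trace (Zm n * Xm n ^ a)) (Matrix.trace (Zm n * Xm n ^ b)) =
      (∑ r ∈ Finset.Icc 1 a, Matrix.trace (Zm n * Xm n ^ r * Zm n * Xm n ^ (a + b - r)))
        - ∑ r ∈ Finset.Icc 1 b, Matrix.trace (Zm n * Xm n ^ r * Zm n * Xm n ^ (a + b - r)) := by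
  have DX : Dm br (Matrix.trace (Zm n * Xm n ^ a)) (Xm n) = -(Xm n * Zm n * Xm n ^ a) := by
    refine Matrix.ext fun i j => ?_
    rw [Dm_apply, hanti, brX_tr br hXX hXZ hadd hleib i j a, Matrix.neg_apply]
  have DZ : Dm br (Matrix.trace (Zm n * Xm n ^ a)) (Zm n) = -(Wmat n a) := by
    refine Matrix.ext fun i j => ?_
    rw [Dm_apply, hanti, brZ_tr br hZZ hXZ hanti hadd hleib i j a, Matrix.neg_apply]
  rw [br_tr br hadd hleib _ b, DX, DZ]
  rw [icc_S n a b a, icc_S n a b b]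
  rw [Finset.sum_congr rfl (fun m hm => by
    rw [Matrix.mul_neg, Matrix.trace_neg, q5 n a b m (Finset.mem_range.mp hm)])]
  rw [Matrix.mul_neg, Matrix.trace_neg]
  simp only [Wmat]
  rw [Matrix.mul_sub, Matrix.mul_sub, Matrix.mul_sub, Matrix.mul_smul, Matrix.mul_smul,
    Matrix.mul_smul, Matrix.mul_smul, Matrix.mul_sum, Matrix.mul_sum,
    Matrix.trace_sub, Matrix.trace_sub, Matrix.trace_sub, Matrix.trace_smul, Matrix.trace_smul,
    Matrix.trace_smul, Matrix.trace_smul, Matrix.trace_sum, Matrix.trace_sum,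
    q1, q2, q3, q4]
  rw [Finset.sum_neg_distrib]
  have hr : ∑ m ∈ Finset.range a, Sd n a b m
      = ∑ m ∈ Finset.range a, Sd n a b (m+1) + Sd n a b 0 - Sd n a b a := by
    have h1 := Finset.sum_range_succ (Sd n a b) a
    have h2 := Finset.sum_range_succ' (Sd n a b) a
    linear_combination h2 - h1
  rw [hr]
  module
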